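/- There exists a constant C, depending only on ρ₀, such that for all integers m ≥ 0 and all ⌊m/2⌋ + 1 ≤ j ≤ m, (m!/(j!(m−j)!)) · N_{ρ,m+1}/(N_{ρ,j+1}·N_{ρ,m−j+3}) ≤ C/(m−j+1). -/
import Mathlib
set_option maxHeartbeats 1000000
set_option linter.all false


open MeasureTheory Real Filter

noncomputable section

namespace HypP

/-- Japanese bracket `⟨y⟩ = (1+y²)^{1/2}`. -/
def br (y : ℝ) : ℝ := Real.sqrt (1 + y ^ 2)

/-- Weighting a function of `(x,y)` by `⟨y⟩^e`. -/
def wt (e : ℝ) (g : ℝ → ℝ → ℝ) : ℝ → ℝ → ℝ := fun x y => br y ^ e * g x y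

/-- `m`-th tangential derivative `∂ₓ^m`. -/
def Dx (m : ℕ) (g : ℝ → ℝ → ℝ) : ℝ → ℝ → ℝ :=
  fun x y => iteratedDeriv m (fun x' => g x' y) x

/-- `k`-th normal derivative `∂_y^k`. -/
def Dy (k : ℕ) (g : ℝ → ℝ → ℝ) : ℝ → ℝ → ℝ :=
  fun x y => iteratedDeriv k (fun y' => g x y') y

/-- Squared `L²` norm on the half-plane `ℝ × (0,∞)`. -/
def sqL2 (g : ℝ → ℝ → ℝ) : ℝ := ∫ x : ℝ, ∫ y in Set.Ioi (0 : ℝ), (g x y) ^ 2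

/-- `L²` inner product on the half-plane. -/
def ipL2 (f g : ℝ → ℝ → ℝ) : ℝ := ∫ x : ℝ, ∫ y in Set.Ioi (0 : ℝ), f x y * g x y

/-- Squared `L²ₓL^∞_y` norm on the half-plane. -/
def sqL2xLinfy (g : ℝ → ℝ → ℝ) : ℝ :=
  ∫ x : ℝ, (sSup ((fun y => |g x y|) '' Set.Ioi (0 : ℝ))) ^ 2

/-- The weight `H_{ρ,m,k}`. -/
def Hc (ρ : ℝ) (m k : ℕ) : ℝ :=
  ρ ^ (m + k + 1) * ((m : ℝ) + (k : ℝ) + 1) ^ 9 /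
    (((m + k).factorial : ℝ) * Real.sqrt (m.factorial : ℝ))

/-- The weight `N_{ρ,m} = H_{ρ,m,0}`. -/
def Nc (ρ : ℝ) (m : ℕ) : ℝ := Hc ρ m 0

/-- The weight `L_{ρ,k} = H_{ρ,1,k}`. -/
def Lc (ρ : ℝ) (k : ℕ) : ℝ := Hc ρ 1 k

/-- Squared anisotropic Gevrey norm `‖h‖²_{G^{3/2,1}_{ρ,ℓ}}`. -/
def gevSq (ρ ℓ : ℝ) (h : ℝ → ℝ → ℝ) : ℝ :=
  (∑' m : ℕ, (Nc ρ m * Real.sqrt (sqL2 (wt (ℓ - 1) (Dx m h)))) ^ 2)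
  + ∑' m : ℕ, ∑' k : ℕ,
      (((m : ℝ) + 1) * Hc ρ (m + 1) k *
        Real.sqrt (sqL2 (wt ℓ (Dx m (Dy (k + 1) h))))) ^ 2

/-- Anisotropic Gevrey norm. -/
def gevNorm (ρ ℓ : ℝ) (h : ℝ → ℝ → ℝ) : ℝ := Real.sqrt (gevSq ρ ℓ h)

/-- Membership in the anisotropic Gevrey space `G^{3/2,1}_{ρ,ℓ}`. -/
def InGev (ρ ℓ : ℝ) (h : ℝ → ℝ → ℝ) : Prop :=
  Summable (fun m : ℕ => (Nc ρ m * Real.sqrt (sqL2 (wt (ℓ - 1) (Dx m h)))) ^ 2) ∧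
  Summable (fun p : ℕ × ℕ =>
    (((p.1 : ℝ) + 1) * Hc ρ (p.1 + 1) p.2 *
      Real.sqrt (sqL2 (wt ℓ (Dx p.1 (Dy (p.2 + 1) h))))) ^ 2)

/-- Time derivative `∂ₜ`. -/
def pt (u : ℝ → ℝ → ℝ → ℝ) : ℝ → ℝ → ℝ → ℝ := fun t x y => deriv (fun s => u s x y) t

/-- Tangential derivative `∂ₓ` (time-dependent functions). -/
def px (u : ℝ → ℝ → ℝ → ℝ) : ℝ → ℝ → ℝ → ℝ := fun t x y => deriv (fun x' => u t x' y) x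

/-- Normal derivative `∂_y` (time-dependent functions). -/
def py (u : ℝ → ℝ → ℝ → ℝ) : ℝ → ℝ → ℝ → ℝ := fun t x y => deriv (fun y' => u t x y') y

/-- The normal velocity `v(t,x,y) = -∫₀^y ∂ₓu(t,x,ỹ) dỹ`. -/
def vv (u : ℝ → ℝ → ℝ → ℝ) : ℝ → ℝ → ℝ → ℝ :=
  fun t x y => -∫ s in (0 : ℝ)..y, px u t x s

/-- The auxiliary function `φ = ∂ₜu + u∂ₓu + v∂_yu`. -/
def phi (u : ℝ → ℝ → ℝ → ℝ) : ℝ → ℝ → ℝ → ℝ :=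
  fun t x y => pt u t x y + u t x y * px u t x y + vv u t x y * py u t x y

/-- `u` solves the 2D hyperbolic Prandtl system on `[0,T]`, with the no-slip boundary
condition and decay of `u` at `y → ∞`. -/
def Solves (u : ℝ → ℝ → ℝ → ℝ) (T : ℝ) : Prop :=
  (∀ t ∈ Set.Icc (0 : ℝ) T, ∀ x : ℝ, ∀ y ∈ Set.Ioi (0 : ℝ),
      pt (pt u) t x y + pt u t x y
        + u t x y * px u t x y + vv u t x y * py u t x y
        + pt (fun t' x' y' => u t' x' y' * px u t' x' y' + vv u t' x' y' * py u t' x' y') t x y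
        - py (py u) t x y = 0)
  ∧ (∀ t ∈ Set.Icc (0 : ℝ) T, ∀ x : ℝ, u t x 0 = 0)
  ∧ (∀ t ∈ Set.Icc (0 : ℝ) T, ∀ x : ℝ, Tendsto (fun y => u t x y) atTop (nhds 0))

/-- `U` is the auxiliary function `𝒰` solving
`(∂ₜ + u∂ₓ + v∂_y)∫₀^y 𝒰 dỹ = -∂ₓv`, `𝒰|_{t=0} = 0`. -/
def AuxU (u U : ℝ → ℝ → ℝ → ℝ) (T : ℝ) : Prop :=
  (∀ t ∈ Set.Icc (0 : ℝ) T, ∀ x : ℝ, ∀ y ∈ Set.Ioi (0 : ℝ),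
      pt (fun t' x' y' => ∫ s in (0 : ℝ)..y', U t' x' s) t x y
        + u t x y * px (fun t' x' y' => ∫ s in (0 : ℝ)..y', U t' x' s) t x y
        + vv u t x y * py (fun t' x' y' => ∫ s in (0 : ℝ)..y', U t' x' s) t x y
        = -px (vv u) t x y)
  ∧ (∀ x : ℝ, ∀ y : ℝ, U 0 x y = 0)

/-- The auxiliary function `λ = ∂ₓu - (∂_yu)∫₀^y 𝒰 dỹ`. -/
def lam (u U : ℝ → ℝ → ℝ → ℝ) : ℝ → ℝ → ℝ → ℝ :=
  fun t x y => px u t x y - py u t x y * ∫ s in (0 : ℝ)..y, U t x s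

/-- `|a|²_{X_ρ}` for a time slice `a = (us, Us, ls, fs)` of `(u, 𝒰, λ, φ)`. -/
def Xsq (ρ ℓ : ℝ) (us Us ls fs : ℝ → ℝ → ℝ) : ℝ :=
  (∑' m : ℕ, (Nc ρ (m + 1)) ^ 2 * sqL2 (Dx m Us))
  + (∑' m : ℕ, ((m : ℝ) + 1) * (Nc ρ (m + 1)) ^ 2 * sqL2 (wt (ℓ - 1) (Dx m ls)))
  + ∑' m : ℕ, ∑' k : ℕ, ((m : ℝ) + 1) ^ 2 * (Hc ρ (m + 1) k) ^ 2 *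
      (sqL2 (wt ℓ (Dx m (Dy k fs))) + sqL2 (wt ℓ (Dx m (Dy (k + 1) us))))

/-- `|a|²_{Y_ρ}` for a time slice `a = (us, Us, ls, fs)` of `(u, 𝒰, λ, φ)`. -/
def Ysq (ρ ℓ : ℝ) (us Us ls fs : ℝ → ℝ → ℝ) : ℝ :=
  (∑' m : ℕ, ((m : ℝ) + 1) * (Nc ρ (m + 1)) ^ 2 * sqL2 (Dx m Us))
  + (∑' m : ℕ, ((m : ℝ) + 1) ^ 2 * (Nc ρ (m + 1)) ^ 2 * sqL2 (wt (ℓ - 1) (Dx m ls)))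
  + ∑' m : ℕ, ∑' k : ℕ, ((m : ℝ) + (k : ℝ) + 1) * ((m : ℝ) + 1) ^ 2 * (Hc ρ (m + 1) k) ^ 2 *
      (sqL2 (wt ℓ (Dx m (Dy k fs))) + sqL2 (wt ℓ (Dx m (Dy (k + 1) us))))

/-- `|a|_{X_ρ}`. -/
def Xnorm (ρ ℓ : ℝ) (us Us ls fs : ℝ → ℝ → ℝ) : ℝ := Real.sqrt (Xsq ρ ℓ us Us ls fs)

/-- `|a|_{Y_ρ}`. -/
def Ynorm (ρ ℓ : ℝ) (us Us ls fs : ℝ → ℝ → ℝ) : ℝ := Real.sqrt (Ysq ρ ℓ us Us ls fs)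

end HypP

open HypP

namespace HypP
lemma Ncsq (ρ : ℝ) (n : ℕ) :
    (Nc ρ n)^2 = ρ^(2*n+2) * ((n:ℝ)+1)^18 / ((n.factorial:ℝ))^3 := by
  unfold Nc Hc
  rw [div_pow, mul_pow, mul_pow, Real.sq_sqrt (by positivity : (0:ℝ) ≤ (n.factorial:ℝ))]
  simp only [Nat.add_zero, Nat.cast_zero, add_zero]
  rw [← pow_mul]
  ring

lemma Nc_pos {ρ : ℝ} (hρ : 0 < ρ) (n : ℕ) : 0 < Nc ρ n := by
  unfold Nc Hc
  have h1 : (0:ℝ) < Real.sqrt (n.factorial : ℝ) := by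
    apply Real.sqrt_pos.mpr; exact_mod_cast n.factorial_pos
  positivity
end HypP

/-- estimate (3.5): for `⌊m/2⌋ + 1 ≤ j ≤ m`,
`(m!/(j!(m−j)!)) · N_{ρ,m+1}/(N_{ρ,j+1}N_{ρ,m−j+3}) ≤ C/(m−j+1)`. -/
theorem weight_estimate_fe2 (ρ₀ : ℝ) (hρ₀ : 0 < ρ₀) :
    ∃ C : ℝ, 0 < C ∧
      ∀ ρ : ℝ, (Real.exp 1)⁻¹ * ρ₀ ≤ ρ → ρ ≤ ρ₀ →
        ∀ m j : ℕ, m / 2 + 1 ≤ j → j ≤ m →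
          (m.factorial : ℝ) / ((j.factorial : ℝ) * ((m - j).factorial : ℝ))
              * (Nc ρ (m + 1) / (Nc ρ (j + 1) * Nc ρ (m - j + 3)))
            ≤ C / ((m : ℝ) - (j : ℝ) + 1) := by
  have hexp : (0:ℝ) < Real.exp 1 := Real.exp_pos 1
  refine ⟨2^9 * Real.exp 1 ^ 4 / ρ₀ ^ 4, by positivity, ?_⟩
  intro ρ hρ1 hρ2 m j hj1 hj2
  set C : ℝ := 2^9 * Real.exp 1 ^ 4 / ρ₀ ^ 4 with hC
  have hρ : 0 < ρ := lt_of_lt_of_le (by positivity) hρ1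
  obtain ⟨i, rfl⟩ : ∃ i, m = j + i := ⟨m - j, by omega⟩
  have hsub : j + i - j = i := by omega
  rw [hsub]
  have hij : i ≤ j := by omega
  have hcast : ((j+i : ℕ):ℝ) - (j:ℝ) + 1 = (i:ℝ) + 1 := by push_cast; ring
  rw [hcast]
  -- basic facts
  have hFj : (0:ℝ) < (j.factorial : ℝ) := by exact_mod_cast j.factorial_pos
  have hFi : (0:ℝ) < (i.factorial : ℝ) := by exact_mod_cast i.factorial_pos
  have hb0 : 0 < ((j+i).choose j) := Nat.choose_pos (Nat.le_add_right j i)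
  set b : ℝ := (((j+i).choose j : ℕ) : ℝ) with hbdef
  have hb : (1:ℝ) ≤ b := by rw [hbdef]; exact_mod_cast hb0
  have hbpos : (0:ℝ) < b := by linarith
  have hFm : (((j+i).factorial : ℕ) : ℝ) = b * (j.factorial : ℝ) * (i.factorial : ℝ) := by
    have h := Nat.choose_mul_factorial_mul_factorial (Nat.le_add_right j i)
    rw [hsub] at h
    rw [hbdef]
    exact_mod_cast h.symm
  have hL0 : (0:ℝ) ≤ ((j+i).factorial : ℝ) / ((j.factorial : ℝ) * (i.factorial : ℝ))
      * (Nc ρ (j+i+1) / (Nc ρ (j+1) * Nc ρ (i+3))) := by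
    have := Nc_pos hρ (j+i+1); have := Nc_pos hρ (j+1); have := Nc_pos hρ (i+3)
    positivity
  have hR0 : (0:ℝ) ≤ C / ((i:ℝ)+1) := by positivity
  rw [← Real.sqrt_sq hL0, ← Real.sqrt_sq hR0]
  apply Real.sqrt_le_sqrt
  -- factorial recursions
  have hFm1 : (((j+i+1).factorial : ℕ) : ℝ)
      = ((j:ℝ)+(i:ℝ)+1) * (b * (j.factorial:ℝ) * (i.factorial:ℝ)) := by
    rw [Nat.factorial_succ]; push_cast [hFm]; ring
  have hFj1 : (((j+1).factorial : ℕ) : ℝ) = ((j:ℝ)+1) * (j.factorial:ℝ) := by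
    rw [Nat.factorial_succ]; push_cast; ring
  have hFi3 : (((i+3).factorial : ℕ) : ℝ)
      = ((i:ℝ)+3)*((i:ℝ)+2)*((i:ℝ)+1) * (i.factorial:ℝ) := by
    show (((i+2+1).factorial : ℕ) : ℝ) = _
    rw [Nat.factorial_succ, Nat.factorial_succ, Nat.factorial_succ]; push_cast; ring
  -- squared identity
  have heq : (((j+i).factorial : ℝ) / ((j.factorial : ℝ) * (i.factorial : ℝ))
      * (Nc ρ (j+i+1) / (Nc ρ (j+1) * Nc ρ (i+3))))^2
      = ((j:ℝ)+(i:ℝ)+2)^18 * ((j:ℝ)+1)^3 * ((i:ℝ)+1)^3 * ((i:ℝ)+2)^3 * ((i:ℝ)+3)^3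
        / (ρ^8 * ((j:ℝ)+2)^18 * ((i:ℝ)+4)^18 * ((j:ℝ)+(i:ℝ)+1)^3 * b) := by
    have hA : ((j+i+1 : ℕ):ℝ) + 1 = (j:ℝ)+(i:ℝ)+2 := by push_cast; ring
    have hB : ((j+1 : ℕ):ℝ) + 1 = (j:ℝ)+2 := by push_cast; ring
    have hD : ((i+3 : ℕ):ℝ) + 1 = (i:ℝ)+4 := by push_cast; ring
    simp only [mul_pow, div_pow, Ncsq, hA, hB, hD, hFm, hFm1, hFj1, hFi3]
    obtain ⟨X1, hX1⟩ : ∃ X1:ℝ, ((j:ℝ)+(i:ℝ)+2)^18 = X1 := ⟨_, rfl⟩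
    obtain ⟨X2, hX2⟩ : ∃ X2:ℝ, ((j:ℝ)+2)^18 = X2 := ⟨_, rfl⟩
    obtain ⟨X3, hX3⟩ : ∃ X3:ℝ, ((i:ℝ)+4)^18 = X3 := ⟨_, rfl⟩
    have hX2p : 0 < X2 := by rw [← hX2]; positivity
    have hX3p : 0 < X3 := by rw [← hX3]; positivity
    rw [hX1, hX2, hX3]
    have h5 : ((j:ℝ)+(i:ℝ)+1) ≠ 0 := by positivity
    have h1 : ((j:ℝ)+1) ≠ 0 := by positivity
    have h2 : ((i:ℝ)+1) ≠ 0 := by positivity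
    have h3 : ((i:ℝ)+2) ≠ 0 := by positivity
    have h4 : ((i:ℝ)+3) ≠ 0 := by positivity
    field_simp
    ring
  rw [heq, div_pow]
  rw [div_le_div_iff₀ (by positivity) (by positivity)]
  -- final polynomial inequality
  have hij' : (i:ℝ) ≤ (j:ℝ) := by exact_mod_cast hij
  have hi0 : (0:ℝ) ≤ (i:ℝ) := Nat.cast_nonneg i
  have hstep1 : ((j:ℝ)+(i:ℝ)+2)^18 ≤ (2*((j:ℝ)+2))^18 := by
    apply pow_le_pow_left₀ (by positivity); linarith
  have hstep2 : ((j:ℝ)+1)^3 ≤ ((j:ℝ)+(i:ℝ)+1)^3 := by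
    apply pow_le_pow_left₀ (by positivity); linarith
  have hstep3 : ((i:ℝ)+1)^3 * ((i:ℝ)+2)^3 * ((i:ℝ)+3)^3 * ((i:ℝ)+1)^2 ≤ ((i:ℝ)+4)^18 := by
    calc ((i:ℝ)+1)^3 * ((i:ℝ)+2)^3 * ((i:ℝ)+3)^3 * ((i:ℝ)+1)^2
        ≤ ((i:ℝ)+4)^3 * ((i:ℝ)+4)^3 * ((i:ℝ)+4)^3 * ((i:ℝ)+4)^2 := by
          gcongr <;> linarith
      _ = ((i:ℝ)+4)^11 := by ring
      _ ≤ ((i:ℝ)+4)^18 := by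
          apply pow_le_pow_right₀ (by linarith) (by norm_num)
  have hexp8 : ρ₀^8 ≤ Real.exp 1 ^ 8 * ρ^8 := by
    have h : ρ₀ ≤ Real.exp 1 * ρ := by
      have h2 := mul_le_mul_of_nonneg_left hρ1 hexp.le
      rw [← mul_assoc, mul_inv_cancel₀ hexp.ne', one_mul] at h2
      linarith
    calc ρ₀^8 ≤ (Real.exp 1 * ρ)^8 := pow_le_pow_left₀ hρ₀.le h 8
      _ = Real.exp 1 ^ 8 * ρ^8 := mul_pow _ _ 8
  have hC2 : (2:ℝ)^18 ≤ C^2 * ρ^8 := by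
    have e1 : ((2:ℝ)^9)^2 = 2^18 := by norm_num
    have e2 : (Real.exp 1 ^ 4)^2 = Real.exp 1 ^ 8 := by rw [← pow_mul]
    have e3 : (ρ₀^4)^2 = ρ₀^8 := by rw [← pow_mul]
    have hCsq : C^2 * ρ^8 = 2^18 * (Real.exp 1 ^ 8 * ρ^8) / ρ₀^8 := by
      rw [hC, div_pow, mul_pow, e1, e2, e3]; ring
    rw [hCsq, le_div_iff₀ (by positivity)]
    linarith [hexp8]
  calc ((j:ℝ)+(i:ℝ)+2)^18 * ((j:ℝ)+1)^3 * ((i:ℝ)+1)^3 * ((i:ℝ)+2)^3 * ((i:ℝ)+3)^3 * ((i:ℝ)+1)^2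
      = ((j:ℝ)+(i:ℝ)+2)^18 * ((j:ℝ)+1)^3
        * (((i:ℝ)+1)^3 * ((i:ℝ)+2)^3 * ((i:ℝ)+3)^3 * ((i:ℝ)+1)^2) * 1 := by ring
    _ ≤ (2*((j:ℝ)+2))^18 * ((j:ℝ)+(i:ℝ)+1)^3 * ((i:ℝ)+4)^18 * b := by
        apply mul_le_mul _ hb (by norm_num) (by positivity)
        apply mul_le_mul _ hstep3 (by positivity) (by positivity)
        exact mul_le_mul hstep1 hstep2 (by positivity) (by positivity)
    _ = 2^18 * (((j:ℝ)+2)^18 * ((i:ℝ)+4)^18 * ((j:ℝ)+(i:ℝ)+1)^3 * b) := by ring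
    _ ≤ (C^2 * ρ^8) * (((j:ℝ)+2)^18 * ((i:ℝ)+4)^18 * ((j:ℝ)+(i:ℝ)+1)^3 * b) := by
        apply mul_le_mul_of_nonneg_right hC2 (by positivity)
    _ = C^2 * (ρ^8 * ((j:ℝ)+2)^18 * ((i:ℝ)+4)^18 * ((j:ℝ)+(i:ℝ)+1)^3 * b) := by ring
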